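/- Let $\varepsilon \in (0,1]$, $\delta, a_0, a_1 \in (0,1]$ with $a_1 = a_0 + \delta \le (1+\varepsilon/8)a_0$. Let $X_0, X_1$ be random variables in $[0,1]$ such that $X_b > 0$ implies $X_b \ge a_b$ for $b \in \{0,1\}$, and $\mathbb{E}[X_1] \ge (1+\varepsilon)\mathbb{E}[X_0]$. Then there exists a threshold $t$ with $a_0 \le t \le 1$ such that $\Pr[X_1 > t + \delta/2] \ge (1 + \varepsilon/4)(\Pr[X_0 > t] + (\varepsilon/8)\mathbb{E}[X_1])$. -/

import Mathlib

open MeasureTheory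

lemma tail_split {Ω : Type*} [MeasurableSpace Ω] (μ : Measure Ω) [IsProbabilityMeasure μ]
    (a s : ℝ) (ha1 : a ≤ 1) (hs0 : 0 < s) (hsa : s ≤ a)
    (X : Ω → ℝ) (hX : Measurable X)
    (hr : ∀ ω, X ω ∈ Set.Icc (0 : ℝ) 1) (hgap : ∀ ω, 0 < X ω → a ≤ X ω) :
    ∫ ω, X ω ∂μ
      = s * (μ {ω | 0 < X ω}).toReal + ∫ t in s..1, (μ {ω | t < X ω}).toReal := by
  have hs1 : s ≤ 1 := hsa.trans ha1
  have hXnn : ∀ ω, 0 ≤ X ω := fun ω => (hr ω).1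
  have hint : Integrable X μ := by
    refine (integrable_const (1:ℝ)).mono' hX.aestronglyMeasurable ?_
    exact ae_of_all _ fun ω => by
      rw [Real.norm_eq_abs, abs_of_nonneg (hXnn ω)]; exact (hr ω).2
  have hanti : Antitone (fun t : ℝ => (μ {ω | t < X ω}).toReal) := by
    intro t u htu
    exact ENNReal.toReal_mono (measure_ne_top μ _)
      (measure_mono fun ω h => lt_of_le_of_lt htu h)
  have key := hint.integral_eq_integral_meas_lt (ae_of_all _ hXnn)
  have hzero : ∀ t ∈ Set.Ioi (1:ℝ), (μ {ω | t < X ω}).toReal = (0:ℝ) := by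
    intro t ht
    have he : {ω | t < X ω} = (∅ : Set Ω) := by
      ext ω
      simp only [Set.mem_setOf_eq, Set.mem_empty_iff_false, iff_false, not_lt]
      exact (hr ω).2.trans (le_of_lt ht)
    simp [he]
  have hIoc : IntegrableOn (fun t : ℝ => (μ {ω | t < X ω}).toReal) (Set.Ioc 0 1) :=
    (hanti.intervalIntegrable (a := 0) (b := 1)).1
  have hIoi1 : IntegrableOn (fun t : ℝ => (μ {ω | t < X ω}).toReal) (Set.Ioi 1) :=
    (integrableOn_zero (ε' := ℝ)).congr_fun
      (fun t ht => (hzero t ht).symm) measurableSet_Ioi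
  have hsplit1 : ∫ t in Set.Ioi (0:ℝ), (μ {ω | t < X ω}).toReal
      = (∫ t in Set.Ioc (0:ℝ) 1, (μ {ω | t < X ω}).toReal)
        + ∫ t in Set.Ioi (1:ℝ), (μ {ω | t < X ω}).toReal := by
    rw [← setIntegral_union (Set.Ioc_disjoint_Ioi le_rfl) measurableSet_Ioi hIoc hIoi1,
        Set.Ioc_union_Ioi_eq_Ioi zero_le_one]
  have hz : ∫ t in Set.Ioi (1:ℝ), (μ {ω | t < X ω}).toReal = 0 := by
    rw [setIntegral_congr_fun measurableSet_Ioi hzero, integral_zero]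
  have hsplit2 : ∫ t in Set.Ioc (0:ℝ) 1, (μ {ω | t < X ω}).toReal
      = (∫ t in Set.Ioc (0:ℝ) s, (μ {ω | t < X ω}).toReal)
        + ∫ t in Set.Ioc s 1, (μ {ω | t < X ω}).toReal := by
    rw [← setIntegral_union (Set.Ioc_disjoint_Ioc_of_le le_rfl) measurableSet_Ioc
        (hanti.intervalIntegrable (a := 0) (b := s)).1
        (hanti.intervalIntegrable (a := s) (b := 1)).1,
        Set.Ioc_union_Ioc_eq_Ioc hs0.le hs1]
  have hconst : ∫ t in Set.Ioc (0:ℝ) s, (μ {ω | t < X ω}).toReal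
      = s * (μ {ω | 0 < X ω}).toReal := by
    rw [integral_Ioc_eq_integral_Ioo,
      setIntegral_congr_fun measurableSet_Ioo
        (g := fun _ : ℝ => (μ {ω | 0 < X ω}).toReal) ?_]
    · rw [setIntegral_const, measureReal_def, Real.volume_Ioo, smul_eq_mul,
        ENNReal.toReal_ofReal (by linarith)]
      ring
    · intro t ht
      have he : {ω | t < X ω} = {ω | 0 < X ω} := by
        ext ω
        simp only [Set.mem_setOf_eq]
        exact ⟨fun h => ht.1.trans h,
          fun h => lt_of_lt_of_le (lt_of_lt_of_le ht.2 hsa) (hgap ω h)⟩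
      simp only [he]
  rw [key]; simp only [measureReal_def]; rw [hsplit1, hz, add_zero, hsplit2, hconst, intervalIntegral.integral_of_le hs1]

set_option maxHeartbeats 1000000 in
lemma gap_arith (ε δ a₀ E₀ E₁ p₀ p₁ q : ℝ)
    (hε0 : 0 < ε) (hε1 : ε ≤ 1) (hδ0 : 0 < δ) (ha₀0 : 0 < a₀) (ha₀1 : a₀ ≤ 1)
    (hE₀nn : 0 ≤ E₀) (hE₁pos : 0 < E₁) (hE : (1 + ε) * E₀ ≤ E₁)
    (hp₀nn : 0 ≤ p₀) (hp₁nn : 0 ≤ p₁) (hqnn : 0 ≤ q) (hq : q ≤ p₀)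
    (hδa : δ ≤ ε * a₀ / 8) (hs1 : a₀ + δ/2 ≤ 1)
    (hp₀E : a₀ * p₀ ≤ E₀)
    (hp₁bd : p₁ ≤ (1 + ε/4) * (q + ε/8 * E₁))
    (hmain : E₁ ≤ (a₀ + δ/2) * p₁
      + (1 + ε/4) * ((E₀ - a₀ * p₀) + (1 - a₀) * (ε/8 * E₁))) : False := by
  have hs0 : (0:ℝ) < a₀ + δ/2 := by linarith
  have hstep1 : (a₀ + δ/2) * p₁ ≤ (a₀ + δ/2) * ((1 + ε/4) * (q + ε/8 * E₁)) :=
    mul_le_mul_of_nonneg_left hp₁bd hs0.le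
  have hstep2 : (a₀ + δ/2) * ((1 + ε/4) * (q + ε/8 * E₁))
      ≤ (1 + ε/4) * (a₀ * p₀) + (δ/2) * ((1 + ε/4) * p₀) + (1 + ε/4) * (ε/8 * E₁) := by
    have h2a : (a₀ + δ/2) * ((1 + ε/4) * q) ≤ (a₀ + δ/2) * ((1 + ε/4) * p₀) :=
      mul_le_mul_of_nonneg_left
        (mul_le_mul_of_nonneg_left hq (by linarith)) hs0.le
    have h2b : (a₀ + δ/2) * ((1 + ε/4) * (ε/8 * E₁)) ≤ 1 * ((1 + ε/4) * (ε/8 * E₁)) := by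
      refine mul_le_mul_of_nonneg_right hs1 ?_
      positivity
    nlinarith [h2a, h2b]
  have hstep4 : (δ/2) * p₀ ≤ (ε/16) * E₀ := by
    have h4a : (δ/2) * p₀ ≤ (ε * a₀ / 16) * p₀ :=
      mul_le_mul_of_nonneg_right (by linarith) hp₀nn
    nlinarith [mul_le_mul_of_nonneg_left hp₀E (by linarith : (0:ℝ) ≤ ε/16)]
  have hstep5 : (1 - a₀) * (ε/8 * E₁) ≤ ε/8 * E₁ := by
    nlinarith [mul_nonneg (mul_nonneg (by linarith : (0:ℝ) ≤ ε/8) hE₁pos.le) ha₀0.le]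
  have hb1 : E₁ ≤ (1 + ε/4) * ((1 + ε/16) * E₀) + (1 + ε/4) * (ε/4) * E₁ := by
    nlinarith [hmain, hstep1, hstep2, hstep4, hstep5,
      mul_le_mul_of_nonneg_left hstep4 (by linarith : (0:ℝ) ≤ 1 + ε/4)]
  nlinarith [mul_le_mul_of_nonneg_left hb1 (by linarith : (0:ℝ) ≤ 1 + ε),
    mul_le_mul_of_nonneg_left hE
      (by nlinarith : (0:ℝ) ≤ (1 + ε/4) * (1 + ε/16)),
    mul_pos hE₁pos hε0,
    mul_nonneg (mul_nonneg hE₁pos.le hε0.le) (by linarith : (0:ℝ) ≤ 1 - ε),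
    mul_nonneg (mul_nonneg (mul_nonneg hE₁pos.le hε0.le)
      (by linarith : (0:ℝ) ≤ 1 - ε)) hε0.le]

set_option maxHeartbeats 1000000 in
/-- Gap lemma: let `ε ∈ (0,1]`, `δ, a₀, a₁ ∈ (0,1]` with
`a₁ = a₀ + δ ≤ (1+ε/8)·a₀`. Let `X₀, X₁` be `[0,1]`-valued random variables with
`X_b > 0 → X_b ≥ a_b` and `E[X₁] ≥ (1+ε)·E[X₀]`. Then there exists a threshold
`t ∈ [a₀, 1]` with `Pr[X₁ > t + δ/2] ≥ (1+ε/4)·(Pr[X₀ > t] + (ε/8)·E[X₁])`. -/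
theorem gap_lemma {Ω : Type*} [MeasurableSpace Ω]
    (μ : Measure Ω) [IsProbabilityMeasure μ]
    (ε δ a₀ a₁ : ℝ) (hε0 : 0 < ε) (hε1 : ε ≤ 1)
    (hδ : δ ∈ Set.Ioc (0 : ℝ) 1) (ha₀ : a₀ ∈ Set.Ioc (0 : ℝ) 1)
    (ha₁ : a₁ ∈ Set.Ioc (0 : ℝ) 1)
    (hsum : a₁ = a₀ + δ) (hclose : a₁ ≤ (1 + ε / 8) * a₀)
    (X₀ X₁ : Ω → ℝ) (hX₀ : Measurable X₀) (hX₁ : Measurable X₁)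
    (hr₀ : ∀ ω, X₀ ω ∈ Set.Icc (0 : ℝ) 1) (hr₁ : ∀ ω, X₁ ω ∈ Set.Icc (0 : ℝ) 1)
    (hgap₀ : ∀ ω, 0 < X₀ ω → a₀ ≤ X₀ ω) (hgap₁ : ∀ ω, 0 < X₁ ω → a₁ ≤ X₁ ω)
    (hE : (1 + ε) * ∫ ω, X₀ ω ∂μ ≤ ∫ ω, X₁ ω ∂μ) :
    ∃ t : ℝ, a₀ ≤ t ∧ t ≤ 1 ∧
      (1 + ε / 4) * ((μ {ω | t < X₀ ω}).toReal + (ε / 8) * ∫ ω, X₁ ω ∂μ)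
        ≤ (μ {ω | t + δ / 2 < X₁ ω}).toReal := by
  obtain ⟨hδ0, hδ1⟩ := hδ
  obtain ⟨ha₀0, ha₀1⟩ := ha₀
  obtain ⟨ha₁0, ha₁1⟩ := ha₁
  set E₀ := ∫ ω, X₀ ω ∂μ with hE₀def
  set E₁ := ∫ ω, X₁ ω ∂μ with hE₁def
  have hE₀nn : 0 ≤ E₀ := integral_nonneg fun ω => (hr₀ ω).1
  have hE₁nn : 0 ≤ E₁ := integral_nonneg fun ω => (hr₁ ω).1
  have hint₀ : Integrable X₀ μ := by
    refine (integrable_const (1:ℝ)).mono' hX₀.aestronglyMeasurable ?_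
    exact ae_of_all _ fun ω => by
      rw [Real.norm_eq_abs, abs_of_nonneg (hr₀ ω).1]; exact (hr₀ ω).2
  rcases eq_or_lt_of_le hE₁nn with hE₁z | hE₁pos
  · -- E₁ = 0 : X₀ = 0 a.e., take t = a₀
    refine ⟨a₀, le_refl _, ha₀1, ?_⟩
    have hE₀z : E₀ = 0 := le_antisymm (by nlinarith) hE₀nn
    have hX₀z : X₀ =ᵐ[μ] 0 :=
      (integral_eq_zero_iff_of_nonneg (fun ω => (hr₀ ω).1) hint₀).1 hE₀z
    have hμz : μ {ω | a₀ < X₀ ω} = 0 := by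
      refine measure_mono_null (fun ω h => ?_) (ae_iff.1 hX₀z)
      simp only [Set.mem_setOf_eq, Pi.zero_apply]
      exact ne_of_gt (lt_trans ha₀0 h)
    rw [hμz, ← hE₁z]
    simp
  -- main case
  by_contra hcon
  push_neg at hcon
  set F₀ : ℝ → ℝ := fun t => (μ {ω | t < X₀ ω}).toReal with hF₀def
  set F₁ : ℝ → ℝ := fun t => (μ {ω | t < X₁ ω}).toReal with hF₁def
  have hcon' : ∀ t, a₀ ≤ t → t ≤ 1 →
      F₁ (t + δ / 2) < (1 + ε / 4) * (F₀ t + ε / 8 * E₁) := by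
    intro t h1 h2
    exact hcon t h1 h2
  have hanti₀ : Antitone F₀ := fun t u htu =>
    ENNReal.toReal_mono (measure_ne_top μ _)
      (measure_mono fun ω h => lt_of_le_of_lt htu h)
  have hanti₁ : Antitone F₁ := fun t u htu =>
    ENNReal.toReal_mono (measure_ne_top μ _)
      (measure_mono fun ω h => lt_of_le_of_lt htu h)
  have hnn₀ : ∀ t, 0 ≤ F₀ t := fun t => ENNReal.toReal_nonneg
  have hnn₁ : ∀ t, 0 ≤ F₁ t := fun t => ENNReal.toReal_nonneg
  set p₀ := (μ {ω | 0 < X₀ ω}).toReal with hp₀def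
  set p₁ := (μ {ω | 0 < X₁ ω}).toReal with hp₁def
  have hp₀nn : 0 ≤ p₀ := ENNReal.toReal_nonneg
  have hp₁nn : 0 ≤ p₁ := ENNReal.toReal_nonneg
  have hδa : δ ≤ ε * a₀ / 8 := by nlinarith [hsum, hclose]
  have hs0 : (0:ℝ) < a₀ + δ / 2 := by linarith
  have hsa : a₀ + δ / 2 ≤ a₁ := by linarith
  have hs1 : a₀ + δ / 2 ≤ 1 := hsa.trans ha₁1
  have ha₀1' : a₀ ≤ 1 - δ/2 := by
    have := hsum ▸ ha₁1; linarith
  -- tail formulas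
  have h0 : E₀ = a₀ * p₀ + ∫ t in a₀..1, F₀ t :=
    tail_split μ a₀ a₀ ha₀1 ha₀0 le_rfl X₀ hX₀ hr₀ hgap₀
  have h1 : E₁ = (a₀ + δ/2) * p₁ + ∫ t in (a₀ + δ/2)..1, F₁ t :=
    tail_split μ a₁ (a₀ + δ / 2) ha₁1 hs0 hsa X₁ hX₁ hr₁ hgap₁
  have hI₀nn : 0 ≤ ∫ t in a₀..1, F₀ t :=
    intervalIntegral.integral_nonneg ha₀1 fun u _ => hnn₀ u
  have hp₀E : a₀ * p₀ ≤ E₀ := by rw [h0]; linarith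
  -- shift substitution
  have hshift : ∫ t in (a₀ + δ/2)..1, F₁ t = ∫ t in a₀..(1 - δ/2), F₁ (t + δ/2) := by
    rw [intervalIntegral.integral_comp_add_right (fun t => F₁ t) (δ/2)]
    norm_num
  have hanti₁' : Antitone fun t => F₁ (t + δ/2) :=
    fun t u htu => hanti₁ (by linarith)
  have hmono1 : ∫ t in a₀..(1 - δ/2), F₁ (t + δ/2) ≤ ∫ t in a₀..1, F₁ (t + δ/2) := by
    have hadd : ((∫ t in a₀..(1 - δ/2), F₁ (t + δ/2))
        + ∫ t in (1 - δ/2)..1, F₁ (t + δ/2)) = ∫ t in a₀..1, F₁ (t + δ/2) :=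
      intervalIntegral.integral_add_adjacent_intervals
        hanti₁'.intervalIntegrable hanti₁'.intervalIntegrable
    have hnn : 0 ≤ ∫ t in (1 - δ/2)..1, F₁ (t + δ/2) :=
      intervalIntegral.integral_nonneg (by linarith) fun u _ => hnn₁ _
    linarith
  -- pointwise bound
  have hptwise : ∫ t in a₀..1, F₁ (t + δ/2)
      ≤ ∫ t in a₀..1, (1 + ε/4) * (F₀ t + ε/8 * E₁) := by
    refine intervalIntegral.integral_mono_on ha₀1 hanti₁'.intervalIntegrable ?_ ?_
    · exact ((hanti₀.intervalIntegrable.add intervalIntegrable_const).const_mul _)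
    · intro t ht
      exact (hcon' t ht.1 ht.2).le
  have hRHS : ∫ t in a₀..1, (1 + ε/4) * (F₀ t + ε/8 * E₁)
      = (1 + ε/4) * ((∫ t in a₀..1, F₀ t) + (1 - a₀) * (ε/8 * E₁)) := by
    rw [intervalIntegral.integral_const_mul,
      intervalIntegral.integral_add hanti₀.intervalIntegrable intervalIntegrable_const,
      intervalIntegral.integral_const, smul_eq_mul]
  -- p₁ bound
  have hp₁eq : F₁ (a₀ + δ/2) = p₁ := by
    have he : {ω | a₀ + δ/2 < X₁ ω} = {ω | 0 < X₁ ω} := by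
      ext ω
      simp only [Set.mem_setOf_eq]
      constructor
      · intro h; exact lt_trans hs0 h
      · intro h
        exact lt_of_lt_of_le (by linarith : a₀ + δ/2 < a₁) (hgap₁ ω h)
    simp only [hF₁def, he, hp₁def]
  have hp₁bd : p₁ ≤ (1 + ε/4) * (F₀ a₀ + ε/8 * E₁) := by
    have := hcon' a₀ le_rfl ha₀1
    rw [hp₁eq] at this
    exact this.le
  have hF₀a₀ : F₀ a₀ ≤ p₀ :=
    ENNReal.toReal_mono (measure_ne_top μ _)
      (measure_mono fun ω h => lt_trans ha₀0 h)
  have hIF₀ : ∫ t in a₀..1, F₀ t = E₀ - a₀ * p₀ := by rw [h0]; ring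
  have hF₀a₀nn : 0 ≤ F₀ a₀ := hnn₀ _
  -- combine the integral estimates
  have hchain : ∫ t in a₀..(1 - δ/2), F₁ (t + δ/2)
      ≤ (1 + ε/4) * ((E₀ - a₀ * p₀) + (1 - a₀) * (ε/8 * E₁)) := by
    have := hmono1.trans (hptwise.trans_eq hRHS)
    rw [hIF₀] at this
    exact this
  have hmain : E₁ ≤ (a₀ + δ/2) * p₁
      + (1 + ε/4) * ((E₀ - a₀ * p₀) + (1 - a₀) * (ε/8 * E₁)) := by
    linarith [h1, hshift, hchain]
  exact gap_arith ε δ a₀ E₀ E₁ p₀ p₁ (F₀ a₀) hε0 hε1 hδ0 ha₀0 ha₀1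
    hE₀nn hE₁pos hE hp₀nn hp₁nn hF₀a₀nn hF₀a₀ hδa hs1 hp₀E hp₁bd hmain
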